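/- Assume 0 < σ_y < √(2 κ_t a_I) and let ψ* := arcsin(σ_y/√(2 κ_t a_I)). Then for every ψ with ψ* ≤ ψ < π/2 one has a_I ≤ G_c(ψ) < a_II, where a_II = a_I·(1 + κ_t/κ_H) − σ_y²/(2 κ_H). -/

import Mathlib

/-- With `0 < σy < √(2 κt a_I)` and `ψ* = arcsin(σy/√(2 κt a_I))`,
for every `ψ` with `ψ* ≤ ψ < π/2` one has `a_I ≤ G_c(ψ) < a_II`, where
`a_II = a_I·(1 + κt/κH) − σy²/(2κH)`. -/
theorem stmt8 (κt κH aI σy σc πII aII : ℝ)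
    (hκt : 0 < κt) (hκH : 0 < κH) (haI : 0 < aI)
    (hσy : 0 < σy) (hσy' : σy < Real.sqrt (2 * κt * aI))
    (hσc : σc = Real.sqrt (2 * κt * aI))
    (hπII : πII = (σc - σy) / κH)
    (haII : aII = aI + σy * πII + (1 / 2) * κH * πII ^ 2)
    (Gc : ℝ → ℝ)
    (hGc : ∀ ψ, Gc ψ = (2 * aI * (κt + κH) - σy ^ 2) * (1 + Real.tan ψ ^ 2)
        / (2 * (κt + κH + κH * Real.tan ψ ^ 2)))
    (ψs : ℝ) (hψs : ψs = Real.arcsin (σy / Real.sqrt (2 * κt * aI))) :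
    (∀ ψ : ℝ, ψs ≤ ψ → ψ < Real.pi / 2 → aI ≤ Gc ψ ∧ Gc ψ < aII) ∧
    aII = aI * (1 + κt / κH) - σy ^ 2 / (2 * κH) := by
  obtain ⟨s, hsdef⟩ : ∃ s, s = Real.sqrt (2 * κt * aI) := ⟨_, rfl⟩
  rw [← hsdef] at hσy' hσc hψs
  have hs : 0 < s := lt_trans hσy hσy'
  have hs2 : s ^ 2 = 2 * κt * aI := by rw [hsdef]; exact Real.sq_sqrt (by positivity)
  have hσy2 : σy ^ 2 < 2 * κt * aI := by nlinarith
  have hA : 0 < 2 * κt * aI - σy ^ 2 := by linarith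
  -- formula for aII
  have haII2 : aII * (2 * κH) = 2 * aI * κH + 2 * κt * aI - σy ^ 2 := by
    rw [haII, hπII, hσc]
    field_simp
    linear_combination hs2
  have haII3 : aII = aI * (1 + κt / κH) - σy ^ 2 / (2 * κH) := by
    field_simp
    nlinarith [haII2]
  refine ⟨fun ψ hψ1 hψ2 => ?_, haII3⟩
  have hx1 : σy / s < 1 := (div_lt_one hs).mpr hσy'
  have hx0 : 0 < σy / s := div_pos hσy hs
  have hψs0 : 0 < ψs := by rw [hψs]; exact Real.arcsin_pos.mpr hx0
  have hpos : 0 < 1 - (σy / s) ^ 2 := by nlinarith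
  have htpos : 0 < Real.tan ψs := by
    rw [hψs, Real.tan_arcsin]
    exact div_pos hx0 (Real.sqrt_pos.mpr hpos)
  have htan2 : Real.tan ψs ^ 2 * (2 * κt * aI - σy ^ 2) = σy ^ 2 := by
    have h4 : Real.tan ψs ^ 2 = (σy / s) ^ 2 / (1 - (σy / s) ^ 2) := by
      rw [hψs, Real.tan_arcsin, div_pow, Real.sq_sqrt hpos.le]
    rw [h4, div_pow, hs2]
    have h3 : 1 - (σy / s) ^ 2 ≠ 0 := ne_of_gt hpos
    rw [div_pow, hs2] at h3
    have h2 : (2 : ℝ) * κt * aI ≠ 0 := by positivity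
    field_simp
  have h6 : Real.tan ψs ^ 2 ≤ Real.tan ψ ^ 2 := by
    have htle : Real.tan ψs ≤ Real.tan ψ := by
      rcases eq_or_lt_of_le hψ1 with h | h
      · rw [h]
      · exact (Real.tan_lt_tan_of_lt_of_lt_pi_div_two (by linarith) hψ2 h).le
    nlinarith
  have hkey : σy ^ 2 ≤ Real.tan ψ ^ 2 * (2 * κt * aI - σy ^ 2) := by
    calc σy ^ 2 = Real.tan ψs ^ 2 * (2 * κt * aI - σy ^ 2) := htan2.symm
      _ ≤ _ := mul_le_mul_of_nonneg_right h6 hA.le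
  have hD : 0 < 2 * (κt + κH + κH * Real.tan ψ ^ 2) := by positivity
  have haII5 : aII = (2 * aI * κH + 2 * κt * aI - σy ^ 2) / (2 * κH) := by
    rw [eq_div_iff (by positivity)]
    linarith [haII2]
  rw [hGc ψ]
  constructor
  · rw [le_div_iff₀ hD]
    linarith [hkey]
  · rw [div_lt_iff₀ hD, haII5, div_mul_eq_mul_div, lt_div_iff₀ (by positivity : (0:ℝ) < 2 * κH)]
    linarith [mul_pos hA (show (0:ℝ) < κt + κH by linarith),
      mul_pos hκH (pow_pos hσy 2)]
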